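/- Let F and G be formal group laws over a commutative ring R, let φ : F → G be a strict isomorphism, let p be a prime, and let m ≥ 2. If the coefficient of X^j in the p-series [p]_F vanishes for all 1 ≤ j < m, then the coefficient of X^j in [p]_G also vanishes for all 1 ≤ j < m, and the coefficients of X^m in [p]_F and in [p]_G are equal. (In particular, over a ring with p = 0, the element v_n^F — the coefficient of X^{p^n} in [p]_F when all lower coefficients vanish — depends only on the strict isomorphism class of F.) -/

import Mathlib

namespace FGL

variable {R : Type*} [CommRing R]

/-- `subst2 F a b` is the substitution `F(a,b)` of the power series `a`, `b`
(with zero constant term) into the two-variable power series `F`. -/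
noncomputable def subst2 {σ : Type*} (F : MvPowerSeries (Fin 2) R)
    (a b : MvPowerSeries σ R) : MvPowerSeries σ R :=
  fun d =>
    ∑ ij ∈ Finset.range ((d.sum fun _ k => k) + 1) ×ˢ
        Finset.range ((d.sum fun _ k => k) + 1),
      MvPowerSeries.coeff (Finsupp.single 0 ij.1 + Finsupp.single 1 ij.2) F *
        MvPowerSeries.coeff d (a ^ ij.1 * b ^ ij.2)

/-- `subst1 f G` is the substitution `f(G)` of the power series `G`
(with zero constant term) into the one-variable power series `f`. -/
noncomputable def subst1 {σ : Type*} (f : PowerSeries R) (G : MvPowerSeries σ R) :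
    MvPowerSeries σ R :=
  fun d =>
    ∑ n ∈ Finset.range ((d.sum fun _ k => k) + 1),
      PowerSeries.coeff n f * MvPowerSeries.coeff d (G ^ n)

/-- Composition `f(g)` of one-variable power series (`g` with zero constant term). -/
noncomputable def pcomp (f g : PowerSeries R) : PowerSeries R := subst1 f g

/-- A formal group law over `R`: a two-variable power series `F(X,Y)` with
`F(X,0) = X`, `F(0,Y) = Y`, `F(X,Y) = F(Y,X)` and `F(F(X,Y),Z) = F(X,F(Y,Z))`. -/
structure IsFGL (F : MvPowerSeries (Fin 2) R) : Prop where
  unit_left : subst2 F (MvPowerSeries.X 0) 0 = MvPowerSeries.X 0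
  unit_right : subst2 F 0 (MvPowerSeries.X 1) = MvPowerSeries.X 1
  comm : subst2 F (MvPowerSeries.X 1) (MvPowerSeries.X 0) = F
  assoc : subst2 F (subst2 F (MvPowerSeries.X 0) (MvPowerSeries.X 1))
        (MvPowerSeries.X 2 : MvPowerSeries (Fin 3) R)
      = subst2 F (MvPowerSeries.X 0) (subst2 F (MvPowerSeries.X 1) (MvPowerSeries.X 2))

/-- A homomorphism `f : F → G` of formal group laws: a one-variable power series with
zero constant term such that `f(F(X,Y)) = G(f(X), f(Y))`. -/
structure IsHom (F G : MvPowerSeries (Fin 2) R) (f : PowerSeries R) : Prop where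
  const : PowerSeries.constantCoeff f = 0
  hom : subst1 f F =
    subst2 G (subst1 f (MvPowerSeries.X 0)) (subst1 f (MvPowerSeries.X 1))

/-- The coefficientwise Frobenius twist `F^{(p)}`. -/
noncomputable def frob (p : ℕ) (F : MvPowerSeries (Fin 2) R) : MvPowerSeries (Fin 2) R :=
  fun d => (MvPowerSeries.coeff d F) ^ p

/-- The one-variable power series `F_Y(X,0)`, whose coefficient of `X^n` is the
coefficient of `X^n Y` in `F`. -/
noncomputable def FY0 (F : MvPowerSeries (Fin 2) R) : PowerSeries R :=
  PowerSeries.mk fun n =>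
    MvPowerSeries.coeff (Finsupp.single 0 n + Finsupp.single 1 1) F

/-- The formal partial derivative `F_X(X,Y)` with respect to the first variable. -/
noncomputable def FX (F : MvPowerSeries (Fin 2) R) : MvPowerSeries (Fin 2) R :=
  fun d => ((d 0 + 1 : ℕ) : R) * MvPowerSeries.coeff (d + Finsupp.single 0 1) F

/-- The `n`-series `[n]_F` of a formal group law, defined by `[0]_F = 0` and
`[n+1]_F(X) = F([n]_F(X), X)`. -/
noncomputable def nSeries (F : MvPowerSeries (Fin 2) R) : ℕ → PowerSeries R
  | 0 => 0
  | n + 1 => subst2 F (nSeries F n) PowerSeries.X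

section Aux

open MvPowerSeries Finset

variable {σ : Type*}

def dsum (d : σ →₀ ℕ) : ℕ := d.sum fun _ k => k

lemma dsum_add (u v : σ →₀ ℕ) : dsum (u + v) = dsum u + dsum v :=
  Finsupp.sum_add_index' (fun _ => rfl) (fun _ _ _ => rfl)

@[simp] lemma dsum_zero : dsum (0 : σ →₀ ℕ) = 0 := by simp [dsum]

@[simp] lemma dsum_single (i : σ) (n : ℕ) : dsum (Finsupp.single i n) = n := by
  simp [dsum, Finsupp.sum_single_index]

lemma dsum_eq_zero_iff {d : σ →₀ ℕ} : dsum d = 0 ↔ d = 0 := by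
  constructor
  · intro h
    ext i
    by_cases hi : d i = 0
    · simp [hi]
    · exfalso
      have hmem : i ∈ d.support := Finsupp.mem_support_iff.mpr hi
      have := Finset.sum_eq_zero_iff.mp h i hmem
      exact hi this
  · rintro rfl; simp

noncomputable def fs (i j : ℕ) : Fin 2 →₀ ℕ := Finsupp.single 0 i + Finsupp.single 1 j

@[simp] lemma fs_apply0 (i j : ℕ) : fs i j 0 = i := by
  simp [fs, Finsupp.single_apply]

@[simp] lemma fs_apply1 (i j : ℕ) : fs i j 1 = j := by
  simp [fs, Finsupp.single_apply]

@[simp] lemma dsum_fs (i j : ℕ) : dsum (fs i j) = i + j := by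
  simp [fs, dsum_add]

lemma fs_eta (m : Fin 2 →₀ ℕ) : fs (m 0) (m 1) = m := by
  ext i
  fin_cases i
  · exact fs_apply0 _ _
  · exact fs_apply1 _ _

lemma fs_inj {i j i' j' : ℕ} (h : fs i j = fs i' j') : i = i' ∧ j = j' := by
  constructor
  · have := congrArg (fun m : Fin 2 →₀ ℕ => m 0) h; simpa using this
  · have := congrArg (fun m : Fin 2 →₀ ℕ => m 1) h; simpa using this

lemma fs_add (i j k l : ℕ) : fs i j + fs k l = fs (i + k) (j + l) := by
  ext t; fin_cases t <;> simp

/-- coefficient of `subst2`, by definition. -/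
lemma coeff_subst2 (F : MvPowerSeries (Fin 2) R) (a b : MvPowerSeries σ R) (d : σ →₀ ℕ) :
    MvPowerSeries.coeff d (subst2 F a b) =
      ∑ ij ∈ Finset.range (dsum d + 1) ×ˢ Finset.range (dsum d + 1),
        MvPowerSeries.coeff (fs ij.1 ij.2) F *
          MvPowerSeries.coeff d (a ^ ij.1 * b ^ ij.2) := rfl

lemma coeff_subst1 (f : PowerSeries R) (G : MvPowerSeries σ R) (d : σ →₀ ℕ) :
    MvPowerSeries.coeff d (subst1 f G) =
      ∑ n ∈ Finset.range (dsum d + 1),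
        PowerSeries.coeff n f * MvPowerSeries.coeff d (G ^ n) := rfl

/-- Vanishing of low coefficients of powers. -/
lemma coeff_pow_of_lt {a : MvPowerSeries σ R} (ha : constantCoeff a = 0) :
    ∀ (n : ℕ) (d : σ →₀ ℕ), dsum d < n → MvPowerSeries.coeff d (a ^ n) = 0 := by
  classical
  intro n
  induction n with
  | zero => intro d hd; omega
  | succ n ih =>
    intro d hd
    rw [pow_succ']
    rw [MvPowerSeries.coeff_mul]
    apply Finset.sum_eq_zero
    rintro ⟨u, v⟩ huv
    have huv' : u + v = d := Finset.HasAntidiagonal.mem_antidiagonal.mp huv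
    by_cases hu : u = 0
    · subst hu
      have : MvPowerSeries.coeff 0 a = 0 := by
        rwa [MvPowerSeries.coeff_zero_eq_constantCoeff]
      simp [this]
    · have h1 : 1 ≤ dsum u := by
        rcases Nat.eq_zero_or_pos (dsum u) with h | h
        · exact absurd (dsum_eq_zero_iff.mp h) hu
        · exact h
      have h2 : dsum u + dsum v = dsum d := by rw [← dsum_add, huv']
      have : dsum v < n := by omega
      simp [ih v this]

lemma coeff_pow_mul_pow_of_lt {a b : MvPowerSeries σ R} (ha : constantCoeff a = 0)
    (hb : constantCoeff b = 0) (i j : ℕ) (d : σ →₀ ℕ) (h : dsum d < i + j) :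
    MvPowerSeries.coeff d (a ^ i * b ^ j) = 0 := by
  classical
  rw [MvPowerSeries.coeff_mul]
  apply Finset.sum_eq_zero
  rintro ⟨u, v⟩ huv
  have huv' : u + v = d := Finset.HasAntidiagonal.mem_antidiagonal.mp huv
  have h2 : dsum u + dsum v = dsum d := by rw [← dsum_add, huv']
  by_cases hu : dsum u < i
  · simp [coeff_pow_of_lt ha i u hu]
  · have : dsum v < j := by omega
    simp [coeff_pow_of_lt hb j v this]

/-- Congruence of coefficients of powers. -/
lemma coeff_pow_congr {a b : MvPowerSeries σ R} {D : ℕ}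
    (h : ∀ e : σ →₀ ℕ, dsum e ≤ D → MvPowerSeries.coeff e a = MvPowerSeries.coeff e b) :
    ∀ (n : ℕ) (d : σ →₀ ℕ), dsum d ≤ D →
      MvPowerSeries.coeff d (a ^ n) = MvPowerSeries.coeff d (b ^ n) := by
  classical
  intro n
  induction n with
  | zero => intro d _; rfl
  | succ n ih =>
    intro d hd
    rw [pow_succ, pow_succ, MvPowerSeries.coeff_mul, MvPowerSeries.coeff_mul]
    apply Finset.sum_congr rfl
    rintro ⟨u, v⟩ huv
    have huv' : u + v = d := Finset.HasAntidiagonal.mem_antidiagonal.mp huv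
    have h2 : dsum u + dsum v = dsum d := by rw [← dsum_add, huv']
    rw [ih u (by omega), h v (by omega)]

lemma coeff_mulpow_congr {a a' b b' : MvPowerSeries σ R} {D : ℕ}
    (ha : ∀ e : σ →₀ ℕ, dsum e ≤ D → MvPowerSeries.coeff e a = MvPowerSeries.coeff e a')
    (hb : ∀ e : σ →₀ ℕ, dsum e ≤ D → MvPowerSeries.coeff e b = MvPowerSeries.coeff e b')
    (i j : ℕ) (d : σ →₀ ℕ) (hd : dsum d ≤ D) :
    MvPowerSeries.coeff d (a ^ i * b ^ j) = MvPowerSeries.coeff d (a' ^ i * b' ^ j) := by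
  classical
  rw [MvPowerSeries.coeff_mul, MvPowerSeries.coeff_mul]
  apply Finset.sum_congr rfl
  rintro ⟨u, v⟩ huv
  have huv' : u + v = d := Finset.HasAntidiagonal.mem_antidiagonal.mp huv
  have h2 : dsum u + dsum v = dsum d := by rw [← dsum_add, huv']
  rw [coeff_pow_congr ha i u (by omega), coeff_pow_congr hb j v (by omega)]

end Aux

section Aux2

open MvPowerSeries Finset

variable {σ : Type*}

/-- Extended-range formula for `subst1`. -/
lemma coeff_subst1_ext {G : MvPowerSeries σ R} (hG : constantCoeff G = 0)
    (f : PowerSeries R) (d : σ →₀ ℕ) {N : ℕ} (hN : dsum d < N) :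
    MvPowerSeries.coeff d (subst1 f G) =
      ∑ n ∈ Finset.range N,
        PowerSeries.coeff n f * MvPowerSeries.coeff d (G ^ n) := by
  rw [coeff_subst1]
  apply Finset.sum_subset
  · intro x hx
    simp only [Finset.mem_range] at hx ⊢
    omega
  · intro x _ hx
    simp only [Finset.mem_range, not_lt] at hx
    rw [coeff_pow_of_lt hG x d (by omega), mul_zero]

/-- Extended-range formula for `subst2`. -/
lemma coeff_subst2_ext {a b : MvPowerSeries σ R} (ha : constantCoeff a = 0)
    (hb : constantCoeff b = 0) (H : MvPowerSeries (Fin 2) R) (d : σ →₀ ℕ)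
    {N : ℕ} (hN : dsum d < N) :
    MvPowerSeries.coeff d (subst2 H a b) =
      ∑ ij ∈ Finset.range N ×ˢ Finset.range N,
        MvPowerSeries.coeff (fs ij.1 ij.2) H *
          MvPowerSeries.coeff d (a ^ ij.1 * b ^ ij.2) := by
  rw [coeff_subst2]
  apply Finset.sum_subset
  · rintro ⟨i, j⟩ hx
    simp only [Finset.mem_product, Finset.mem_range] at hx ⊢
    omega
  · rintro ⟨i, j⟩ hx hx2
    simp only [Finset.mem_product, Finset.mem_range, not_and_or, not_lt] at hx hx2
    have : dsum d < i + j := by omega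
    rw [coeff_pow_mul_pow_of_lt ha hb i j d this, mul_zero]

/-- Congruence in the `f` argument of `subst1` (low coefficients only matter). -/
lemma coeff_subst1_congr_f {f₁ f₂ : PowerSeries R} {G : MvPowerSeries σ R} {d : σ →₀ ℕ}
    (h : ∀ n : ℕ, n ≤ dsum d → PowerSeries.coeff n f₁ = PowerSeries.coeff n f₂) :
    MvPowerSeries.coeff d (subst1 f₁ G) = MvPowerSeries.coeff d (subst1 f₂ G) := by
  rw [coeff_subst1, coeff_subst1]
  apply Finset.sum_congr rfl
  intro n hn
  simp only [Finset.mem_range] at hn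
  rw [h n (by omega)]

/-- Congruence in the `G` argument of `subst1`. -/
lemma coeff_subst1_congr_G {f : PowerSeries R} {G₁ G₂ : MvPowerSeries σ R} {d : σ →₀ ℕ}
    (h : ∀ e : σ →₀ ℕ, dsum e ≤ dsum d →
      MvPowerSeries.coeff e G₁ = MvPowerSeries.coeff e G₂) :
    MvPowerSeries.coeff d (subst1 f G₁) = MvPowerSeries.coeff d (subst1 f G₂) := by
  rw [coeff_subst1, coeff_subst1]
  apply Finset.sum_congr rfl
  intro n _
  rw [coeff_pow_congr h n d le_rfl]

/-- Congruence in the `H` argument of `subst2` (low total-degree coefficients only matter). -/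
lemma coeff_subst2_congr_H {H₁ H₂ : MvPowerSeries (Fin 2) R} {a b : MvPowerSeries σ R}
    {d : σ →₀ ℕ} (ha : constantCoeff a = 0) (hb : constantCoeff b = 0)
    (h : ∀ i j : ℕ, i + j ≤ dsum d →
      MvPowerSeries.coeff (fs i j) H₁ = MvPowerSeries.coeff (fs i j) H₂) :
    MvPowerSeries.coeff d (subst2 H₁ a b) = MvPowerSeries.coeff d (subst2 H₂ a b) := by
  rw [coeff_subst2, coeff_subst2]
  apply Finset.sum_congr rfl
  rintro ⟨i, j⟩ hij
  by_cases hle : i + j ≤ dsum d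
  · rw [h i j hle]
  · rw [coeff_pow_mul_pow_of_lt ha hb i j d (by omega), mul_zero, mul_zero]

/-- Congruence in the `a`, `b` arguments of `subst2`. -/
lemma coeff_subst2_congr_ab {H : MvPowerSeries (Fin 2) R} {a a' b b' : MvPowerSeries σ R}
    {d : σ →₀ ℕ}
    (ha : ∀ e : σ →₀ ℕ, dsum e ≤ dsum d →
      MvPowerSeries.coeff e a = MvPowerSeries.coeff e a')
    (hb : ∀ e : σ →₀ ℕ, dsum e ≤ dsum d →
      MvPowerSeries.coeff e b = MvPowerSeries.coeff e b') :
    MvPowerSeries.coeff d (subst2 H a b) = MvPowerSeries.coeff d (subst2 H a' b') := by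
  rw [coeff_subst2, coeff_subst2]
  apply Finset.sum_congr rfl
  rintro ⟨i, j⟩ _
  rw [coeff_mulpow_congr ha hb i j d le_rfl]

@[simp] lemma constantCoeff_subst1 (f : PowerSeries R) (G : MvPowerSeries σ R) :
    constantCoeff (subst1 f G) = PowerSeries.constantCoeff f := by
  rw [← MvPowerSeries.coeff_zero_eq_constantCoeff_apply, coeff_subst1]
  simp only [dsum_zero, zero_add, Finset.range_one, Finset.sum_singleton, pow_zero]
  rw [MvPowerSeries.coeff_zero_eq_constantCoeff_apply, map_one, mul_one,
    PowerSeries.coeff_zero_eq_constantCoeff]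

@[simp] lemma constantCoeff_subst2 (H : MvPowerSeries (Fin 2) R) (a b : MvPowerSeries σ R) :
    constantCoeff (subst2 H a b) = constantCoeff H := by
  rw [← MvPowerSeries.coeff_zero_eq_constantCoeff_apply, coeff_subst2]
  have h1 : Finset.range (dsum (0 : σ →₀ ℕ) + 1) ×ˢ Finset.range (dsum (0 : σ →₀ ℕ) + 1)
      = {((0 : ℕ), (0 : ℕ))} := by simp
  rw [h1, Finset.sum_singleton]
  simp only [pow_zero, one_mul]
  rw [MvPowerSeries.coeff_zero_eq_constantCoeff_apply, map_one, mul_one]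
  have : fs 0 0 = 0 := by ext t; fin_cases t <;> simp
  rw [this, MvPowerSeries.coeff_zero_eq_constantCoeff_apply]

end Aux2

section Bridges

open MvPowerSeries Finset

variable {σ : Type*}

lemma prod_fin2 {M : Type*} [CommMonoid M] (m : Fin 2 →₀ ℕ) (v : Fin 2 → M) :
    (m.prod fun i k => v i ^ k) = v 0 ^ m 0 * v 1 ^ m 1 := by
  rw [Finsupp.prod_fintype _ _ (fun i => pow_zero (v i))]
  exact Fin.prod_univ_two _

lemma subst2_add_left (H K : MvPowerSeries (Fin 2) R) (a b : MvPowerSeries σ R) :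
    subst2 (H + K) a b = subst2 H a b + subst2 K a b := by
  ext d
  rw [map_add, coeff_subst2, coeff_subst2, coeff_subst2, ← Finset.sum_add_distrib]
  apply Finset.sum_congr rfl
  rintro ⟨i, j⟩ _
  rw [map_add, add_mul]

/-- Evaluation of a polynomial on a power series with zero constant term agrees
with `subst1`. -/
lemma aeval_eq_subst1 {G : MvPowerSeries σ R} (hG : constantCoeff G = 0)
    (q : Polynomial R) :
    Polynomial.aeval G q = subst1 (↑q : PowerSeries R) G := by
  ext d
  set N : ℕ := max (dsum d + 1) (q.natDegree + 1) with hN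
  have h1 : q.natDegree < N := lt_of_lt_of_le (Nat.lt_succ_self _) (le_max_right _ _)
  have h2 : dsum d < N := lt_of_lt_of_le (Nat.lt_succ_self _) (le_max_left _ _)
  rw [Polynomial.aeval_eq_sum_range' h1, coeff_subst1_ext hG _ _ h2, map_sum]
  apply Finset.sum_congr rfl
  intro n _
  rw [LinearMap.map_smul, smul_eq_mul, Polynomial.coeff_coe]

/-- Evaluation of a two-variable polynomial at power series with zero constant term
agrees with `subst2`. -/
lemma aeval2_eq_subst2 {a b : MvPowerSeries σ R} (ha : constantCoeff a = 0)
    (hb : constantCoeff b = 0) (P : MvPolynomial (Fin 2) R) :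
    MvPolynomial.aeval ![a, b] P = subst2 (↑P : MvPowerSeries (Fin 2) R) a b := by
  classical
  induction P using MvPolynomial.induction_on' with
  | add p q hp hq =>
    rw [map_add, MvPolynomial.coe_add, subst2_add_left, hp, hq]
  | monomial m c =>
    ext d
    rw [MvPolynomial.aeval_monomial, prod_fin2]
    simp only [Matrix.cons_val_zero, Matrix.cons_val_one, Matrix.head_cons]
    rw [MvPowerSeries.algebraMap_apply]
    have halg : (algebraMap R R) c = c := rfl
    rw [halg, MvPowerSeries.coeff_C_mul]
    rw [coeff_subst2]
    have key : ∀ ij : ℕ × ℕ,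
        MvPowerSeries.coeff (fs ij.1 ij.2) (↑(MvPolynomial.monomial m c) :
          MvPowerSeries (Fin 2) R) * MvPowerSeries.coeff d (a ^ ij.1 * b ^ ij.2)
        = if ij = (m 0, m 1) then c * MvPowerSeries.coeff d (a ^ (m 0) * b ^ (m 1))
          else 0 := by
      rintro ⟨i, j⟩
      rw [MvPolynomial.coeff_coe, MvPolynomial.coeff_monomial]
      by_cases h : m = fs i j
      · have hi : i = m 0 := by rw [h]; simp
        have hj : j = m 1 := by rw [h]; simp
        subst hi; subst hj
        rw [if_pos h, if_pos rfl]
      · have hne : (i, j) ≠ (m 0, m 1) := by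
          intro hij
          apply h
          have hi : i = m 0 := congrArg Prod.fst hij
          have hj : j = m 1 := congrArg Prod.snd hij
          rw [hi, hj, fs_eta]
        rw [if_neg h, if_neg hne, zero_mul]
    rw [Finset.sum_congr rfl fun ij _ => key ij, Finset.sum_ite_eq']
    by_cases hmem : (m 0, m 1) ∈ Finset.range (dsum d + 1) ×ˢ Finset.range (dsum d + 1)
    · rw [if_pos hmem]
    · rw [if_neg hmem]
      simp only [Finset.mem_product, Finset.mem_range, not_and_or, not_lt] at hmem
      rw [coeff_pow_mul_pow_of_lt ha hb _ _ d (by omega), mul_zero]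
end Bridges

section Trunc

open MvPowerSeries Finset

variable {σ : Type*}

/-- Square truncation of a two-variable power series, as a polynomial. -/
noncomputable def trunc2 (N : ℕ) (H : MvPowerSeries (Fin 2) R) : MvPolynomial (Fin 2) R :=
  ∑ ij ∈ Finset.range N ×ˢ Finset.range N,
    MvPolynomial.monomial (fs ij.1 ij.2) (MvPowerSeries.coeff (fs ij.1 ij.2) H)

lemma coeff_trunc2 {N i j : ℕ} (hi : i < N) (hj : j < N) (H : MvPowerSeries (Fin 2) R) :
    MvPolynomial.coeff (fs i j) (trunc2 N H) = MvPowerSeries.coeff (fs i j) H := by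
  classical
  rw [trunc2, MvPolynomial.coeff_sum]
  have key : ∀ ij : ℕ × ℕ,
      MvPolynomial.coeff (fs i j) (MvPolynomial.monomial (fs ij.1 ij.2)
        (MvPowerSeries.coeff (fs ij.1 ij.2) H))
      = if ij = (i, j) then MvPowerSeries.coeff (fs i j) H else 0 := by
    rintro ⟨i', j'⟩
    rw [MvPolynomial.coeff_monomial]
    by_cases h : fs i' j' = fs i j
    · obtain ⟨hi', hj'⟩ := fs_inj h
      subst hi'; subst hj'
      rw [if_pos rfl, if_pos rfl]
    · have : (i', j') ≠ (i, j) := fun hc => h (by cases hc; rfl)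
      rw [if_neg h, if_neg this]
  rw [Finset.sum_congr rfl fun ij _ => key ij, Finset.sum_ite_eq']
  rw [if_pos (by simp [Finset.mem_product, hi, hj])]

lemma coeff_coe_trunc2 {N : ℕ} {e : Fin 2 →₀ ℕ} (h0 : e 0 < N) (h1 : e 1 < N)
    (H : MvPowerSeries (Fin 2) R) :
    MvPowerSeries.coeff e (↑(trunc2 N H) : MvPowerSeries (Fin 2) R) =
      MvPowerSeries.coeff e H := by
  conv_lhs => rw [← fs_eta e]
  conv_rhs => rw [← fs_eta e]
  rw [MvPolynomial.coeff_coe, coeff_trunc2 h0 h1]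

lemma dsum_apply_le (e : Fin 2 →₀ ℕ) (i : Fin 2) : e i ≤ dsum e := by
  have : e = fs (e 0) (e 1) := (fs_eta e).symm
  have h2 : dsum e = e 0 + e 1 := by conv_lhs => rw [this, dsum_fs]
  have ha : e 0 ≤ dsum e := by omega
  have hb : e 1 ≤ dsum e := by omega
  fin_cases i
  · exact ha
  · exact hb

/-- Evaluation of the truncation, in any commutative `R`-algebra. -/
lemma aeval1_trunc {A : Type*} [CommRing A] [Algebra R A] (x : A) (f : PowerSeries R) (D : ℕ) :
    Polynomial.aeval x (PowerSeries.trunc (D + 1) f) =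
      ∑ n ∈ Finset.range (D + 1), PowerSeries.coeff n f • x ^ n := by
  rw [Polynomial.aeval_eq_sum_range' (PowerSeries.natDegree_trunc_lt f D) x]
  apply Finset.sum_congr rfl
  intro n hn
  simp only [Finset.mem_range] at hn
  rw [PowerSeries.coeff_trunc, if_pos hn]

lemma aeval2_trunc2 {A : Type*} [CommRing A] [Algebra R A] (x y : A)
    (H : MvPowerSeries (Fin 2) R) (N : ℕ) :
    MvPolynomial.aeval ![x, y] (trunc2 N H) =
      ∑ ij ∈ Finset.range N ×ˢ Finset.range N,
        MvPowerSeries.coeff (fs ij.1 ij.2) H • (x ^ ij.1 * y ^ ij.2) := by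
  rw [trunc2, map_sum]
  apply Finset.sum_congr rfl
  rintro ⟨i, j⟩ _
  rw [MvPolynomial.aeval_monomial, prod_fin2]
  simp only [Matrix.cons_val_zero, Matrix.cons_val_one, Matrix.head_cons, fs_apply0, fs_apply1]
  rw [Algebra.smul_def]

/-- `subst1` is approximated by evaluation of truncations. -/
lemma coeff_subst1_trunc {G : MvPowerSeries σ R} (hG : constantCoeff G = 0)
    (f : PowerSeries R) (d : σ →₀ ℕ) {N : ℕ} (hN : dsum d < N) :
    MvPowerSeries.coeff d (subst1 f G) =
      MvPowerSeries.coeff d (Polynomial.aeval G (PowerSeries.trunc N f)) := by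
  rw [aeval_eq_subst1 hG]
  refine (coeff_subst1_congr_f ?_).symm
  intro n hn
  rw [Polynomial.coeff_coe, PowerSeries.coeff_trunc, if_pos (by omega)]

/-- `subst2` is approximated by evaluation of truncations. -/
lemma coeff_subst2_trunc {a b : MvPowerSeries σ R} (ha : constantCoeff a = 0)
    (hb : constantCoeff b = 0) (H : MvPowerSeries (Fin 2) R) (d : σ →₀ ℕ)
    {N : ℕ} (hN : dsum d < N) :
    MvPowerSeries.coeff d (subst2 H a b) =
      MvPowerSeries.coeff d (MvPolynomial.aeval ![a, b] (trunc2 N H)) := by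
  rw [aeval2_eq_subst2 ha hb]
  refine (coeff_subst2_congr_H ha hb ?_).symm
  intro i j hij
  exact coeff_coe_trunc2 (by simp; omega) (by simp; omega) H

/-- Congruence for polynomial evaluation at congruent power series. -/
lemma coeff_aeval_congr {G₁ G₂ : MvPowerSeries σ R} {d : σ →₀ ℕ}
    (h : ∀ e : σ →₀ ℕ, dsum e ≤ dsum d →
      MvPowerSeries.coeff e G₁ = MvPowerSeries.coeff e G₂) (q : Polynomial R) :
    MvPowerSeries.coeff d (Polynomial.aeval G₁ q) =
      MvPowerSeries.coeff d (Polynomial.aeval G₂ q) := by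
  rw [Polynomial.aeval_eq_sum_range' (Nat.lt_succ_self q.natDegree) G₁,
    Polynomial.aeval_eq_sum_range' (Nat.lt_succ_self q.natDegree) G₂, map_sum, map_sum]
  apply Finset.sum_congr rfl
  intro n _
  rw [LinearMap.map_smul, LinearMap.map_smul, coeff_pow_congr h n d le_rfl]

end Trunc

section KLemmas

open MvPowerSeries Finset

variable {σ : Type*}

/-- Associativity: substituting `a`, `b` into `f(F)` gives `f(F(a,b))`. -/
lemma subst2_subst1 {a b : MvPowerSeries σ R} (ha : constantCoeff a = 0)
    (hb : constantCoeff b = 0) {F : MvPowerSeries (Fin 2) R}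
    (hF : constantCoeff F = 0) (f : PowerSeries R) :
    subst2 (subst1 f F) a b = subst1 f (subst2 F a b) := by
  ext d
  set D := dsum d with hD
  set Pf := PowerSeries.trunc (D + 1) f with hPfdef
  set PF := trunc2 (D + 1) F with hPFdef
  have hconst : constantCoeff (subst2 F a b) = 0 := by
    rw [constantCoeff_subst2]; exact hF
  have hPF : ∀ e : Fin 2 →₀ ℕ, dsum e ≤ D →
      MvPowerSeries.coeff e (↑PF : MvPowerSeries (Fin 2) R) = MvPowerSeries.coeff e F := by
    intro e he
    exact coeff_coe_trunc2 (by have := dsum_apply_le e 0; omega)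
      (by have := dsum_apply_le e 1; omega) F
  have claimB : ∀ e : σ →₀ ℕ, dsum e ≤ dsum d →
      MvPowerSeries.coeff e (MvPolynomial.aeval ![a, b] PF) =
      MvPowerSeries.coeff e (subst2 F a b) := by
    intro e he
    exact (coeff_subst2_trunc ha hb F e (by omega)).symm
  have claimA : ∀ i j : ℕ, i + j ≤ dsum d →
      MvPowerSeries.coeff (fs i j) (subst1 f F) =
      MvPowerSeries.coeff (fs i j)
        (↑(Polynomial.aeval PF Pf) : MvPowerSeries (Fin 2) R) := by
    intro i j hij
    rw [coeff_subst1_ext hF f (fs i j) (N := D + 1) (by rw [dsum_fs]; omega)]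
    rw [MvPolynomial.coeff_coe, hPfdef, aeval1_trunc, MvPolynomial.coeff_sum]
    apply Finset.sum_congr rfl
    intro n _
    rw [MvPolynomial.coeff_smul, smul_eq_mul]
    congr 1
    have h1 : MvPolynomial.coeff (fs i j) (PF ^ n) =
        MvPowerSeries.coeff (fs i j) ((↑PF : MvPowerSeries (Fin 2) R) ^ n) := by
      rw [← MvPolynomial.coe_pow, MvPolynomial.coeff_coe]
    rw [h1]
    exact (coeff_pow_congr hPF n (fs i j) (by rw [dsum_fs]; omega)).symm
  calc MvPowerSeries.coeff d (subst2 (subst1 f F) a b)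
      = MvPowerSeries.coeff d (subst2 (↑(Polynomial.aeval PF Pf)) a b) :=
        coeff_subst2_congr_H ha hb claimA
    _ = MvPowerSeries.coeff d (MvPolynomial.aeval ![a, b] (Polynomial.aeval PF Pf)) := by
        rw [aeval2_eq_subst2 ha hb]
    _ = MvPowerSeries.coeff d (Polynomial.aeval (MvPolynomial.aeval ![a, b] PF) Pf) := by
        rw [Polynomial.aeval_algHom_apply (MvPolynomial.aeval ![a, b]) PF Pf]
    _ = MvPowerSeries.coeff d (Polynomial.aeval (subst2 F a b) Pf) :=
        coeff_aeval_congr claimB Pf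
    _ = MvPowerSeries.coeff d (subst1 f (subst2 F a b)) :=
        (coeff_subst1_trunc hconst f d (Nat.lt_succ_self _)).symm

end KLemmas

section KLemmas2

open MvPowerSeries Finset

variable {σ : Type*}

lemma unit_eta (e : Unit →₀ ℕ) : Finsupp.single () (e ()) = e := by
  ext
  simp [Finsupp.single_apply]

lemma dsum_unit (e : Unit →₀ ℕ) : dsum e = e () := by
  conv_lhs => rw [← unit_eta e]
  rw [dsum_single]

lemma pcoeff_eq (n : ℕ) (f : PowerSeries R) :
    PowerSeries.coeff n f = MvPowerSeries.coeff (Finsupp.single () n) f := rfl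

/-- Associativity: substituting `a`, `b` into `G(c₀,c₁)` gives `G(c₀(a,b), c₁(a,b))`. -/
lemma subst2_subst2 {a b : MvPowerSeries σ R} (ha : constantCoeff a = 0)
    (hb : constantCoeff b = 0) {c0 c1 : MvPowerSeries (Fin 2) R}
    (hc0 : constantCoeff c0 = 0) (hc1 : constantCoeff c1 = 0)
    (G : MvPowerSeries (Fin 2) R) :
    subst2 (subst2 G c0 c1) a b = subst2 G (subst2 c0 a b) (subst2 c1 a b) := by
  ext d
  set D := dsum d with hD
  set PG := trunc2 (D + 1) G with hPG
  set v0 := trunc2 (D + 1) c0 with hv0def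
  set v1 := trunc2 (D + 1) c1 with hv1def
  set Q := MvPolynomial.aeval ![v0, v1] PG with hQ
  have he0 : constantCoeff (subst2 c0 a b) = 0 := by
    rw [constantCoeff_subst2]; exact hc0
  have he1 : constantCoeff (subst2 c1 a b) = 0 := by
    rw [constantCoeff_subst2]; exact hc1
  have hv0 : ∀ e : Fin 2 →₀ ℕ, dsum e ≤ D →
      MvPowerSeries.coeff e (↑v0 : MvPowerSeries (Fin 2) R) =
        MvPowerSeries.coeff e c0 := fun e he =>
    coeff_coe_trunc2 (by have := dsum_apply_le e 0; omega)
      (by have := dsum_apply_le e 1; omega) c0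
  have hv1 : ∀ e : Fin 2 →₀ ℕ, dsum e ≤ D →
      MvPowerSeries.coeff e (↑v1 : MvPowerSeries (Fin 2) R) =
        MvPowerSeries.coeff e c1 := fun e he =>
    coeff_coe_trunc2 (by have := dsum_apply_le e 0; omega)
      (by have := dsum_apply_le e 1; omega) c1
  have claim2 : ∀ i j : ℕ, i + j ≤ dsum d →
      MvPowerSeries.coeff (fs i j) (subst2 G c0 c1) =
      MvPowerSeries.coeff (fs i j) (↑Q : MvPowerSeries (Fin 2) R) := by
    intro i j hij
    have hm : dsum (fs i j) ≤ D := by rw [dsum_fs]; omega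
    rw [MvPolynomial.coeff_coe, hQ, hPG, aeval2_trunc2, MvPolynomial.coeff_sum]
    rw [coeff_subst2_ext hc0 hc1 G (fs i j) (N := D + 1) (by omega)]
    apply Finset.sum_congr rfl
    rintro ⟨i', j'⟩ _
    rw [MvPolynomial.coeff_smul, smul_eq_mul]
    congr 1
    have hcoe : MvPolynomial.coeff (fs i j) (v0 ^ i' * v1 ^ j') =
        MvPowerSeries.coeff (fs i j)
          ((↑v0 : MvPowerSeries (Fin 2) R) ^ i' * (↑v1 : MvPowerSeries (Fin 2) R) ^ j') := by
      rw [← MvPolynomial.coe_pow, ← MvPolynomial.coe_pow, ← MvPolynomial.coe_mul,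
        MvPolynomial.coeff_coe]
    rw [hcoe]
    exact coeff_mulpow_congr (fun e he => (hv0 e (le_trans he hm)).symm)
      (fun e he => (hv1 e (le_trans he hm)).symm) i' j' (fs i j) le_rfl
  have hx0 : ∀ e : σ →₀ ℕ, dsum e ≤ D →
      MvPowerSeries.coeff e (MvPolynomial.aeval ![a, b] v0) =
        MvPowerSeries.coeff e (subst2 c0 a b) := fun e he =>
    (coeff_subst2_trunc ha hb c0 e (by omega)).symm
  have hx1 : ∀ e : σ →₀ ℕ, dsum e ≤ D →
      MvPowerSeries.coeff e (MvPolynomial.aeval ![a, b] v1) =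
        MvPowerSeries.coeff e (subst2 c1 a b) := fun e he =>
    (coeff_subst2_trunc ha hb c1 e (by omega)).symm
  calc MvPowerSeries.coeff d (subst2 (subst2 G c0 c1) a b)
      = MvPowerSeries.coeff d (subst2 (↑Q) a b) := coeff_subst2_congr_H ha hb claim2
    _ = MvPowerSeries.coeff d (MvPolynomial.aeval ![a, b] Q) := by
        rw [aeval2_eq_subst2 ha hb]
    _ = MvPowerSeries.coeff d (MvPolynomial.aeval
          ![MvPolynomial.aeval ![a, b] v0, MvPolynomial.aeval ![a, b] v1] PG) := by
        have hfun : (fun i => MvPolynomial.aeval ![a, b] (![v0, v1] i)) =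
            ![MvPolynomial.aeval ![a, b] v0, MvPolynomial.aeval ![a, b] v1] := by
          funext i
          fin_cases i <;> simp
        rw [hQ, MvPolynomial.comp_aeval_apply, hfun]
    _ = ∑ ij ∈ Finset.range (D + 1) ×ˢ Finset.range (D + 1),
          MvPowerSeries.coeff (fs ij.1 ij.2) G *
            MvPowerSeries.coeff d ((MvPolynomial.aeval ![a, b] v0) ^ ij.1 *
              (MvPolynomial.aeval ![a, b] v1) ^ ij.2) := by
        rw [hPG, aeval2_trunc2, map_sum]
        apply Finset.sum_congr rfl
        rintro ⟨i, j⟩ _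
        rw [LinearMap.map_smul, smul_eq_mul]
    _ = ∑ ij ∈ Finset.range (D + 1) ×ˢ Finset.range (D + 1),
          MvPowerSeries.coeff (fs ij.1 ij.2) G *
            MvPowerSeries.coeff d ((subst2 c0 a b) ^ ij.1 * (subst2 c1 a b) ^ ij.2) := by
        apply Finset.sum_congr rfl
        rintro ⟨i, j⟩ _
        rw [coeff_mulpow_congr hx0 hx1 i j d le_rfl]
    _ = MvPowerSeries.coeff d (subst2 G (subst2 c0 a b) (subst2 c1 a b)) :=
        (coeff_subst2_ext he0 he1 G d (Nat.lt_succ_self _)).symm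

/-- Associativity: substituting `c` into `G(u,v)` gives `G(u(c), v(c))`. -/
lemma subst1_subst2 {c : MvPowerSeries σ R} (hc : constantCoeff c = 0)
    {u v : PowerSeries R} (hu : PowerSeries.constantCoeff u = 0)
    (hv : PowerSeries.constantCoeff v = 0) (G : MvPowerSeries (Fin 2) R) :
    subst1 (subst2 G u v) c = subst2 G (subst1 u c) (subst1 v c) := by
  ext d
  set D := dsum d with hD
  set PG := trunc2 (D + 1) G with hPG
  set Pu := PowerSeries.trunc (D + 1) u with hPu
  set Pv := PowerSeries.trunc (D + 1) v with hPv
  set q := MvPolynomial.aeval ![Pu, Pv] PG with hq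
  have hu' : constantCoeff u = 0 := hu
  have hv' : constantCoeff v = 0 := hv
  have hsu : constantCoeff (subst1 u c) = 0 := by
    rw [constantCoeff_subst1]; exact hu
  have hsv : constantCoeff (subst1 v c) = 0 := by
    rw [constantCoeff_subst1]; exact hv
  have hPu' : ∀ e : Unit →₀ ℕ, dsum e ≤ D →
      MvPowerSeries.coeff e (↑Pu : PowerSeries R) = MvPowerSeries.coeff e u := by
    intro e he
    rw [← unit_eta e, ← pcoeff_eq, ← pcoeff_eq, Polynomial.coeff_coe,
      hPu, PowerSeries.coeff_trunc, if_pos (by rw [dsum_unit] at he; omega)]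
  have hPv' : ∀ e : Unit →₀ ℕ, dsum e ≤ D →
      MvPowerSeries.coeff e (↑Pv : PowerSeries R) = MvPowerSeries.coeff e v := by
    intro e he
    rw [← unit_eta e, ← pcoeff_eq, ← pcoeff_eq, Polynomial.coeff_coe,
      hPv, PowerSeries.coeff_trunc, if_pos (by rw [dsum_unit] at he; omega)]
  have claimC : ∀ n : ℕ, n ≤ dsum d →
      PowerSeries.coeff n (subst2 G u v) = PowerSeries.coeff n (↑q : PowerSeries R) := by
    intro n hn
    have hdsn : dsum (Finsupp.single () n) = n := dsum_single _ _
    rw [Polynomial.coeff_coe, hq, hPG, aeval2_trunc2]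
    rw [Polynomial.finset_sum_coeff]
    rw [pcoeff_eq, coeff_subst2_ext hu' hv' G (Finsupp.single () n) (N := D + 1)
      (by rw [hdsn]; omega)]
    apply Finset.sum_congr rfl
    rintro ⟨i, j⟩ _
    rw [Polynomial.coeff_smul, smul_eq_mul]
    congr 1
    have hcoe : (Pu ^ i * Pv ^ j).coeff n =
        MvPowerSeries.coeff (Finsupp.single () n)
          ((↑Pu : PowerSeries R) ^ i * (↑Pv : PowerSeries R) ^ j) := by
      rw [← pcoeff_eq, ← Polynomial.coe_pow, ← Polynomial.coe_pow, ← Polynomial.coe_mul,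
        Polynomial.coeff_coe]
    rw [hcoe]
    exact coeff_mulpow_congr (D := n)
      (fun e he => (hPu' e (le_trans he hn)).symm)
      (fun e he => (hPv' e (le_trans he hn)).symm) i j (Finsupp.single () n) (le_of_eq hdsn)
  have hx0 : ∀ e : σ →₀ ℕ, dsum e ≤ D →
      MvPowerSeries.coeff e (Polynomial.aeval c Pu) =
        MvPowerSeries.coeff e (subst1 u c) := fun e he =>
    (coeff_subst1_trunc hc u e (by omega)).symm
  have hx1 : ∀ e : σ →₀ ℕ, dsum e ≤ D →
      MvPowerSeries.coeff e (Polynomial.aeval c Pv) =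
        MvPowerSeries.coeff e (subst1 v c) := fun e he =>
    (coeff_subst1_trunc hc v e (by omega)).symm
  calc MvPowerSeries.coeff d (subst1 (subst2 G u v) c)
      = MvPowerSeries.coeff d (subst1 (↑q : PowerSeries R) c) :=
        coeff_subst1_congr_f claimC
    _ = MvPowerSeries.coeff d (Polynomial.aeval c q) := by
        rw [aeval_eq_subst1 hc]
    _ = MvPowerSeries.coeff d (MvPolynomial.aeval
          ![Polynomial.aeval c Pu, Polynomial.aeval c Pv] PG) := by
        have hfun : (fun i => Polynomial.aeval c (![Pu, Pv] i)) =
            ![Polynomial.aeval c Pu, Polynomial.aeval c Pv] := by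
          funext i
          fin_cases i <;> simp
        rw [hq, MvPolynomial.comp_aeval_apply, hfun]
    _ = ∑ ij ∈ Finset.range (D + 1) ×ˢ Finset.range (D + 1),
          MvPowerSeries.coeff (fs ij.1 ij.2) G *
            MvPowerSeries.coeff d ((Polynomial.aeval c Pu) ^ ij.1 *
              (Polynomial.aeval c Pv) ^ ij.2) := by
        rw [hPG, aeval2_trunc2, map_sum]
        apply Finset.sum_congr rfl
        rintro ⟨i, j⟩ _
        rw [LinearMap.map_smul, smul_eq_mul]
    _ = ∑ ij ∈ Finset.range (D + 1) ×ˢ Finset.range (D + 1),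
          MvPowerSeries.coeff (fs ij.1 ij.2) G *
            MvPowerSeries.coeff d ((subst1 u c) ^ ij.1 * (subst1 v c) ^ ij.2) := by
        apply Finset.sum_congr rfl
        rintro ⟨i, j⟩ _
        rw [coeff_mulpow_congr hx0 hx1 i j d le_rfl]
    _ = MvPowerSeries.coeff d (subst2 G (subst1 u c) (subst1 v c)) :=
        (coeff_subst2_ext hsu hsv G d (Nat.lt_succ_self _)).symm

end KLemmas2

section FinalLemmas

open MvPowerSeries Finset

variable {σ : Type*}

lemma fs_one_zero : fs 1 0 = Finsupp.single (0 : Fin 2) 1 := by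
  ext t; fin_cases t <;> simp

lemma fs_zero_one : fs 0 1 = Finsupp.single (1 : Fin 2) 1 := by
  ext t; fin_cases t <;> simp

lemma subst2_X0 {a b : MvPowerSeries σ R} (ha : constantCoeff a = 0)
    (hb : constantCoeff b = 0) :
    subst2 (MvPowerSeries.X 0 : MvPowerSeries (Fin 2) R) a b = a := by
  classical
  ext d
  rw [coeff_subst2]
  have key : ∀ ij : ℕ × ℕ,
      MvPowerSeries.coeff (fs ij.1 ij.2) (MvPowerSeries.X 0 : MvPowerSeries (Fin 2) R) *
        MvPowerSeries.coeff d (a ^ ij.1 * b ^ ij.2)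
      = if ij = (1, 0) then MvPowerSeries.coeff d a else 0 := by
    rintro ⟨i, j⟩
    rw [MvPowerSeries.coeff_X]
    by_cases h : fs i j = Finsupp.single (0 : Fin 2) 1
    · have h2 : fs i j = fs 1 0 := by rw [h, fs_one_zero]
      obtain ⟨rfl, rfl⟩ := fs_inj h2
      rw [if_pos h, if_pos rfl, one_mul, pow_one, pow_zero, mul_one]
    · have : (i, j) ≠ (1, 0) := by
        intro hc
        cases hc
        exact h fs_one_zero
      rw [if_neg h, if_neg this, zero_mul]
  rw [Finset.sum_congr rfl fun ij _ => key ij, Finset.sum_ite_eq']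
  by_cases hmem : ((1 : ℕ), (0 : ℕ)) ∈ Finset.range (dsum d + 1) ×ˢ Finset.range (dsum d + 1)
  · rw [if_pos hmem]
  · rw [if_neg hmem]
    simp only [Finset.mem_product, Finset.mem_range, not_and_or, not_lt] at hmem
    have hd0 : dsum d = 0 := by omega
    have : d = 0 := dsum_eq_zero_iff.mp hd0
    rw [this, MvPowerSeries.coeff_zero_eq_constantCoeff_apply, ha]

lemma subst2_X1 {a b : MvPowerSeries σ R} (ha : constantCoeff a = 0)
    (hb : constantCoeff b = 0) :
    subst2 (MvPowerSeries.X 1 : MvPowerSeries (Fin 2) R) a b = b := by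
  classical
  ext d
  rw [coeff_subst2]
  have key : ∀ ij : ℕ × ℕ,
      MvPowerSeries.coeff (fs ij.1 ij.2) (MvPowerSeries.X 1 : MvPowerSeries (Fin 2) R) *
        MvPowerSeries.coeff d (a ^ ij.1 * b ^ ij.2)
      = if ij = (0, 1) then MvPowerSeries.coeff d b else 0 := by
    rintro ⟨i, j⟩
    rw [MvPowerSeries.coeff_X]
    by_cases h : fs i j = Finsupp.single (1 : Fin 2) 1
    · have h2 : fs i j = fs 0 1 := by rw [h, fs_zero_one]
      obtain ⟨rfl, rfl⟩ := fs_inj h2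
      rw [if_pos h, if_pos rfl, one_mul, pow_one, pow_zero, one_mul]
    · have : (i, j) ≠ (0, 1) := by
        intro hc
        cases hc
        exact h fs_zero_one
      rw [if_neg h, if_neg this, zero_mul]
  rw [Finset.sum_congr rfl fun ij _ => key ij, Finset.sum_ite_eq']
  by_cases hmem : ((0 : ℕ), (1 : ℕ)) ∈ Finset.range (dsum d + 1) ×ˢ Finset.range (dsum d + 1)
  · rw [if_pos hmem]
  · rw [if_neg hmem]
    simp only [Finset.mem_product, Finset.mem_range, not_and_or, not_lt] at hmem
    have hd0 : dsum d = 0 := by omega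
    have : d = 0 := dsum_eq_zero_iff.mp hd0
    rw [this, MvPowerSeries.coeff_zero_eq_constantCoeff_apply, hb]

lemma pcoeff_subst1 (f g : PowerSeries R) (j : ℕ) :
    PowerSeries.coeff j (subst1 f g) =
      ∑ n ∈ Finset.range (j + 1), PowerSeries.coeff n f * PowerSeries.coeff j (g ^ n) := by
  rw [pcoeff_eq, coeff_subst1, dsum_single]
  rfl

lemma subst1_X_right (f : PowerSeries R) : subst1 f PowerSeries.X = f := by
  classical
  ext d
  rw [pcoeff_subst1]
  have key : ∀ n : ℕ,
      PowerSeries.coeff n f * PowerSeries.coeff d ((PowerSeries.X : PowerSeries R) ^ n)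
      = if n = d then PowerSeries.coeff d f else 0 := by
    intro n
    rw [PowerSeries.coeff_X_pow]
    by_cases h : d = n
    · subst h
      rw [if_pos rfl, if_pos rfl, mul_one]
    · rw [if_neg h, if_neg (fun hc => h hc.symm), mul_zero]
  rw [Finset.sum_congr rfl fun n _ => key n, Finset.sum_ite_eq']
  rw [if_pos (Finset.mem_range.mpr (Nat.lt_succ_self _))]

lemma subst1_X_left {g : PowerSeries R} (hg : PowerSeries.constantCoeff g = 0) :
    subst1 PowerSeries.X g = g := by
  classical
  ext d
  rw [pcoeff_subst1]
  have key : ∀ n : ℕ,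
      PowerSeries.coeff n (PowerSeries.X : PowerSeries R) * PowerSeries.coeff d (g ^ n)
      = if n = 1 then PowerSeries.coeff d g else 0 := by
    intro n
    rw [PowerSeries.coeff_X]
    by_cases h : n = 1
    · rw [if_pos h, if_pos h, one_mul, h, pow_one]
    · rw [if_neg h, if_neg h, zero_mul]
  rw [Finset.sum_congr rfl fun n _ => key n, Finset.sum_ite_eq']
  by_cases hmem : 1 ∈ Finset.range (d + 1)
  · rw [if_pos hmem]
  · rw [if_neg hmem]
    simp only [Finset.mem_range] at hmem
    have hd0 : d = 0 := by omega
    subst hd0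
    rw [PowerSeries.coeff_zero_eq_constantCoeff, hg]

lemma subst1_zero_left (G : MvPowerSeries σ R) : subst1 (0 : PowerSeries R) G = 0 := by
  ext d
  rw [coeff_subst1]
  simp

lemma subst1_zero_right {f : PowerSeries R} (hf : PowerSeries.constantCoeff f = 0) :
    subst1 f (0 : MvPowerSeries σ R) = 0 := by
  ext d
  rw [coeff_subst1]
  rw [map_zero]
  apply Finset.sum_eq_zero
  intro n _
  rcases Nat.eq_zero_or_pos n with rfl | hn
  · have h0 : PowerSeries.coeff 0 f = 0 := by
      rw [PowerSeries.coeff_zero_eq_constantCoeff]; exact hf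
    rw [h0, zero_mul]
  · rw [zero_pow (by omega), map_zero, mul_zero]

end FinalLemmas


section Main

open MvPowerSeries Finset

lemma IsFGL.constZero {F : MvPowerSeries (Fin 2) R} (hF : IsFGL F) :
    MvPowerSeries.constantCoeff F = 0 := by
  have h := congrArg (fun S : MvPowerSeries ℕ R =>
    MvPowerSeries.constantCoeff S) hF.unit_left
  rw [constantCoeff_subst2] at h
  rwa [MvPowerSeries.constantCoeff_X] at h

lemma const_nSeries {F : MvPowerSeries (Fin 2) R} (hF : IsFGL F) (n : ℕ) :
    PowerSeries.constantCoeff (nSeries F n) = 0 := by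
  induction n with
  | zero => simp [nSeries]
  | succ n ih =>
    show PowerSeries.constantCoeff (subst2 F (nSeries F n) PowerSeries.X) = 0
    have h : MvPowerSeries.constantCoeff (subst2 F (nSeries F n) PowerSeries.X)
        = MvPowerSeries.constantCoeff F := constantCoeff_subst2 _ _ _
    show MvPowerSeries.constantCoeff (subst2 F (nSeries F n) PowerSeries.X) = 0
    rw [h, hF.constZero]

lemma intertwine {F G : MvPowerSeries (Fin 2) R} (hF : IsFGL F) (hG : IsFGL G)
    {φ : PowerSeries R} (hφ : IsHom F G φ) (n : ℕ) :
    subst1 φ (nSeries F n) = subst1 (nSeries G n) φ := by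
  induction n with
  | zero =>
    show subst1 φ (0 : PowerSeries R) = subst1 (0 : PowerSeries R) φ
    rw [subst1_zero_right hφ.const, subst1_zero_left]
  | succ n ih =>
    have hF0 := hF.constZero
    have haF : PowerSeries.constantCoeff (nSeries F n) = 0 := const_nSeries hF n
    have haG : PowerSeries.constantCoeff (nSeries G n) = 0 := const_nSeries hG n
    have haF' : MvPowerSeries.constantCoeff (nSeries F n) = 0 := haF
    have hXc : PowerSeries.constantCoeff (PowerSeries.X : PowerSeries R) = 0 :=
      PowerSeries.constantCoeff_X
    have hX : MvPowerSeries.constantCoeff (PowerSeries.X : PowerSeries R) = 0 := hXc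
    have hφc : MvPowerSeries.constantCoeff φ = 0 := hφ.const
    have hφ0 : MvPowerSeries.constantCoeff
        (subst1 φ (MvPowerSeries.X 0 : MvPowerSeries (Fin 2) R)) = 0 := by
      rw [constantCoeff_subst1]; exact hφ.const
    have hφ1 : MvPowerSeries.constantCoeff
        (subst1 φ (MvPowerSeries.X 1 : MvPowerSeries (Fin 2) R)) = 0 := by
      rw [constantCoeff_subst1]; exact hφ.const
    have hX0 : MvPowerSeries.constantCoeff
        (MvPowerSeries.X 0 : MvPowerSeries (Fin 2) R) = 0 := MvPowerSeries.constantCoeff_X 0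
    have hX1 : MvPowerSeries.constantCoeff
        (MvPowerSeries.X 1 : MvPowerSeries (Fin 2) R) = 0 := MvPowerSeries.constantCoeff_X 1
    show subst1 φ (subst2 F (nSeries F n) PowerSeries.X)
        = subst1 (subst2 G (nSeries G n) PowerSeries.X) φ
    calc subst1 φ (subst2 F (nSeries F n) PowerSeries.X)
        = subst2 (subst1 φ F) (nSeries F n) PowerSeries.X :=
          (subst2_subst1 haF' hX hF0 φ).symm
      _ = subst2 (subst2 G (subst1 φ (MvPowerSeries.X 0)) (subst1 φ (MvPowerSeries.X 1)))
            (nSeries F n) PowerSeries.X := by rw [hφ.hom]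
      _ = subst2 G (subst2 (subst1 φ (MvPowerSeries.X 0)) (nSeries F n) PowerSeries.X)
            (subst2 (subst1 φ (MvPowerSeries.X 1)) (nSeries F n) PowerSeries.X) :=
          subst2_subst2 haF' hX hφ0 hφ1 G
      _ = subst2 G (subst1 φ (subst2 (MvPowerSeries.X 0) (nSeries F n) PowerSeries.X))
            (subst1 φ (subst2 (MvPowerSeries.X 1) (nSeries F n) PowerSeries.X)) := by
          rw [subst2_subst1 haF' hX hX0 φ, subst2_subst1 haF' hX hX1 φ]
      _ = subst2 G (subst1 φ (nSeries F n)) (subst1 φ PowerSeries.X) := by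
          rw [subst2_X0 haF' hX, subst2_X1 haF' hX]
      _ = subst2 G (subst1 (nSeries G n) φ) φ := by rw [ih, subst1_X_right]
      _ = subst2 G (subst1 (nSeries G n) φ) (subst1 PowerSeries.X φ) := by
          rw [subst1_X_left hφ.const]
      _ = subst1 (subst2 G (nSeries G n) PowerSeries.X) φ :=
          (subst1_subst2 hφc haG hXc G).symm

end Main

/-- Let `φ : F → G` be a strict isomorphism of formal group laws over `R`, `p` a prime and
`m ≥ 2`.  If the coefficients of `X^j` in `[p]_F` vanish for all `1 ≤ j < m`, then the same
holds for `[p]_G`, and the coefficients of `X^m` in `[p]_F` and `[p]_G` agree. -/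
theorem statement12 (R : Type*) [CommRing R]
    (F G : MvPowerSeries (Fin 2) R) (hF : IsFGL F) (hG : IsFGL G)
    (φ : PowerSeries R) (hφ : IsHom F G φ) (hφ1 : PowerSeries.coeff 1 φ = 1)
    (p : ℕ) (hp : p.Prime) (m : ℕ) (hm : 2 ≤ m)
    (hlow : ∀ j : ℕ, 1 ≤ j → j < m → PowerSeries.coeff j (nSeries F p) = 0) :
    (∀ j : ℕ, 1 ≤ j → j < m → PowerSeries.coeff j (nSeries G p) = 0) ∧
      PowerSeries.coeff m (nSeries F p) = PowerSeries.coeff m (nSeries G p) := by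
  classical
  set f : PowerSeries R := nSeries F p with hfdef
  set g : PowerSeries R := nSeries G p with hgdef
  have hf0 : PowerSeries.constantCoeff f = 0 := const_nSeries hF p
  have hg0 : PowerSeries.constantCoeff g = 0 := const_nSeries hG p
  have hkey : subst1 φ f = subst1 g φ := intertwine hF hG hφ p
  have hφ0 : PowerSeries.coeff 0 φ = 0 := by
    rw [PowerSeries.coeff_zero_eq_constantCoeff]; exact hφ.const
  -- X^m divides f
  have hfdvd : (PowerSeries.X : PowerSeries R) ^ m ∣ f := by
    rw [PowerSeries.X_pow_dvd_iff]
    intro i hi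
    rcases Nat.eq_zero_or_pos i with rfl | hipos
    · rw [PowerSeries.coeff_zero_eq_constantCoeff]; exact hf0
    · exact hlow i hipos hi
  -- φ = X * ψ with ψ(0) = 1
  have hXdvd : (PowerSeries.X : PowerSeries R) ∣ φ := PowerSeries.X_dvd_iff.mpr hφ.const
  obtain ⟨ψ, hψ⟩ := hXdvd
  have hψ0 : PowerSeries.constantCoeff ψ = 1 := by
    have h1 : PowerSeries.coeff 1 φ = PowerSeries.constantCoeff ψ := by
      rw [hψ]
      simpa using PowerSeries.coeff_X_pow_mul ψ 1 0
    rw [← h1, hφ1]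
  have hφpow_lt : ∀ n j : ℕ, j < n → PowerSeries.coeff j (φ ^ n) = 0 := by
    intro n j hj
    have hd : (PowerSeries.X : PowerSeries R) ^ n ∣ φ ^ n := by
      rw [hψ, mul_pow]; exact Dvd.intro _ rfl
    exact PowerSeries.X_pow_dvd_iff.mp hd j hj
  have hφpow_diag : ∀ n : ℕ, PowerSeries.coeff n (φ ^ n) = 1 := by
    intro n
    rw [hψ, mul_pow]
    have := PowerSeries.coeff_X_pow_mul (ψ ^ n) n 0
    rw [zero_add] at this
    rw [this, PowerSeries.coeff_zero_eq_constantCoeff, map_pow, hψ0, one_pow]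
  -- coefficients of f powers vanish low
  have hfpow : ∀ n j : ℕ, j < n * m → PowerSeries.coeff j (f ^ n) = 0 := by
    intro n j hj
    have hd : (PowerSeries.X : PowerSeries R) ^ (n * m) ∣ f ^ n := by
      rw [pow_mul']
      exact pow_dvd_pow_of_dvd hfdvd n
    exact PowerSeries.X_pow_dvd_iff.mp hd j hj
  -- left side: coeff j (φ ∘ f) = coeff j f for 1 ≤ j ≤ m
  have hL : ∀ j : ℕ, 1 ≤ j → j ≤ m → PowerSeries.coeff j (subst1 φ f) =
      PowerSeries.coeff j f := by
    intro j h1 hjm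
    rw [pcoeff_subst1]
    rw [Finset.sum_eq_single_of_mem 1 (Finset.mem_range.mpr (by omega))]
    · rw [hφ1, one_mul, pow_one]
    · intro n hn hne
      simp only [Finset.mem_range] at hn
      rcases Nat.eq_zero_or_pos n with rfl | hnpos
      · rw [hφ0, zero_mul]
      · have h2 : 2 ≤ n := by omega
        have : j < n * m := by nlinarith
        rw [hfpow n j this, mul_zero]
  -- right side expansion
  have hR : ∀ j : ℕ, PowerSeries.coeff j (subst1 g φ) =
      ∑ n ∈ Finset.range (j + 1), PowerSeries.coeff n g * PowerSeries.coeff j (φ ^ n) :=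
    fun j => pcoeff_subst1 g φ j
  -- the low coefficients of g vanish
  have hglow : ∀ j : ℕ, 1 ≤ j → j < m → PowerSeries.coeff j g = 0 := by
    intro j
    induction j using Nat.strong_induction_on with
    | _ j ihj =>
      intro h1 hjm
      have e2 : PowerSeries.coeff j (subst1 φ f) = PowerSeries.coeff j (subst1 g φ) := by
        rw [hkey]
      rw [hL j h1 (by omega), hR j] at e2
      rw [hlow j h1 hjm] at e2
      rw [Finset.sum_eq_single_of_mem j (Finset.mem_range.mpr (by omega))] at e2
      · rw [hφpow_diag j, mul_one] at e2
        exact e2.symm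
      · intro n hn hne
        simp only [Finset.mem_range] at hn
        rcases Nat.eq_zero_or_pos n with rfl | hnpos
        · rw [PowerSeries.coeff_zero_eq_constantCoeff, hg0, zero_mul]
        · have hnj : n < j := by omega
          rw [ihj n hnj hnpos (by omega), zero_mul]
  refine ⟨hglow, ?_⟩
  -- the coefficient at m
  have e2 : PowerSeries.coeff m (subst1 φ f) = PowerSeries.coeff m (subst1 g φ) := by
    rw [hkey]
  rw [hL m (by omega) le_rfl, hR m] at e2
  rw [Finset.sum_eq_single_of_mem m (Finset.mem_range.mpr (by omega))] at e2
  · rw [hφpow_diag m, mul_one] at e2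
    exact e2
  · intro n hn hne
    simp only [Finset.mem_range] at hn
    rcases Nat.eq_zero_or_pos n with rfl | hnpos
    · rw [PowerSeries.coeff_zero_eq_constantCoeff, hg0, zero_mul]
    · rw [hglow n hnpos (by omega), zero_mul]


end FGL
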